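/- Fix a ∈ [1,3] and r ∈ (0,1/16]. There is a constant C > 0 (depending only on a and r) such that the following holds for any choice of coefficient functions a_k : {−1,1}^k → [1,a] (with a_0 ≡ 1). For all integers 1 ≤ n ≤ m, every x₀ ∈ K_n, and every y ∈ ℝ² with |y − x₀| = r^{n−1}/2, one has | g̃_n(y) − g̃_m(y) | ≤ C 2^{−n}, where g̃_j(y) = 2^{−j} Σ_{ε ∈ 𝓔_j} ln|y − f_j(ε)| for j ≥ 1. -/

import Mathlib

noncomputable section

/-- The sign `±1 : ℝ` associated to a boolean letter. -/
def sgn (b : Bool) : ℝ := if b then 1 else -1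

/-- `f_j(ε) = Σ_{k=1}^{j} (a_{k−1}(ε)/2) r^{k−1} ε_k` (0-based: sum over `k < j`). -/
def fN (r : ℝ) (A : ℕ → (ℕ → Bool) → ℝ) (j : ℕ) (ε : ℕ → Bool) : ℝ :=
  ∑ k ∈ Finset.range j, A k ε / 2 * r ^ k * sgn (ε k)

/-- A word of length `j` (element of `𝓔_j`), extended to an infinite word by `false`. -/
def extWord (j : ℕ) (σ : Fin j → Bool) : ℕ → Bool :=
  fun k => if h : k < j then σ ⟨k, h⟩ else false

/-- `g̃_j(y) = 2^{−j} Σ_{x ∈ K_j} ln |y − x|` for `y ∈ ℝ²`, where `ℝ²` is identified with `ℂ`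
and `K_j ⊂ ℝ = ℝ×{0} ⊂ ℂ`. -/
def gTilde (r : ℝ) (A : ℕ → (ℕ → Bool) → ℝ) (j : ℕ) (y : ℂ) : ℝ :=
  (2 : ℝ)⁻¹ ^ j * ∑ σ : Fin j → Bool, Real.log ‖y - (fN r A j (extWord j σ) : ℂ)‖

lemma abs_sgn (b : Bool) : |sgn b| = 1 := by cases b <;> simp [sgn]

lemma geom_aux (r : ℝ) (h0 : 0 ≤ r) (h1 : r < 1) (n m : ℕ) :
    ∑ k ∈ Finset.Ico n m, r ^ k ≤ r ^ n / (1 - r) := by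
  rcases le_or_gt n m with h | h
  · rw [Finset.sum_Ico_eq_sum_range]
    have hpos : 0 < 1 - r := by linarith
    have hgs := geom_sum_mul r (m - n)
    have hsum0 : 0 ≤ ∑ i ∈ Finset.range (m - n), r ^ i :=
      Finset.sum_nonneg fun i _ => pow_nonneg h0 i
    have hle : ∑ i ∈ Finset.range (m - n), r ^ i ≤ 1 / (1 - r) := by
      rw [le_div_iff₀ hpos]
      nlinarith [pow_nonneg h0 (m - n)]
    calc ∑ i ∈ Finset.range (m - n), r ^ (n + i)
        = r ^ n * ∑ i ∈ Finset.range (m - n), r ^ i := by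
          rw [Finset.mul_sum]; exact Finset.sum_congr rfl fun i _ => pow_add r n i
      _ ≤ r ^ n * (1 / (1 - r)) :=
          mul_le_mul_of_nonneg_left hle (pow_nonneg h0 n)
      _ = r ^ n / (1 - r) := by ring
  · rw [Finset.Ico_eq_empty (by omega), Finset.sum_empty]
    exact div_nonneg (pow_nonneg h0 n) (by linarith)

lemma fN_congr (r : ℝ) (A : ℕ → (ℕ → Bool) → ℝ)
    (hloc : ∀ k ε ε', (∀ j < k, ε j = ε' j) → A k ε = A k ε')
    (j : ℕ) (ε ε' : ℕ → Bool) (h : ∀ k < j, ε k = ε' k) :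
    fN r A j ε = fN r A j ε' := by
  unfold fN
  refine Finset.sum_congr rfl fun k hk => ?_
  have hk' := Finset.mem_range.mp hk
  rw [hloc k ε ε' (fun i hi => h i (hi.trans hk')), h k hk']

lemma term_abs_le (r a : ℝ) (hr0 : 0 ≤ r) (ha3 : a ≤ 3)
    (A : ℕ → (ℕ → Bool) → ℝ) (hA : ∀ k ε, 1 ≤ A k ε ∧ A k ε ≤ a) (k : ℕ) (ε : ℕ → Bool) :
    |A k ε / 2 * r ^ k * sgn (ε k)| ≤ 3 / 2 * r ^ k := by
  have h1 := (hA k ε).1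
  have h2 := (hA k ε).2
  rw [abs_mul, abs_mul, abs_sgn, mul_one, abs_of_nonneg (pow_nonneg hr0 k)]
  have h3 : |A k ε / 2| ≤ 3 / 2 := by rw [abs_of_nonneg (by linarith)]; linarith
  exact mul_le_mul_of_nonneg_right h3 (pow_nonneg hr0 k)

lemma tail_bound (r a : ℝ) (hr0 : 0 < r) (hr1 : r ≤ 1 / 16) (ha3 : a ≤ 3)
    (A : ℕ → (ℕ → Bool) → ℝ) (hA : ∀ k ε, 1 ≤ A k ε ∧ A k ε ≤ a)
    (n m : ℕ) (hnm : n ≤ m) (ε : ℕ → Bool) :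
    |fN r A m ε - fN r A n ε| ≤ 8 / 5 * r ^ n := by
  unfold fN
  rw [← Finset.sum_Ico_eq_sub _ hnm]
  have hgeo := geom_aux r hr0.le (by linarith) n m
  calc |∑ k ∈ Finset.Ico n m, A k ε / 2 * r ^ k * sgn (ε k)|
      ≤ ∑ k ∈ Finset.Ico n m, |A k ε / 2 * r ^ k * sgn (ε k)| :=
        Finset.abs_sum_le_sum_abs _ _
    _ ≤ ∑ k ∈ Finset.Ico n m, 3 / 2 * r ^ k :=
        Finset.sum_le_sum fun k _ => term_abs_le r a hr0.le ha3 A hA k ε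
    _ = 3 / 2 * ∑ k ∈ Finset.Ico n m, r ^ k := by rw [Finset.mul_sum]
    _ ≤ 3 / 2 * (r ^ n / (1 - r)) := by nlinarith
    _ ≤ 8 / 5 * r ^ n := by
        have h : r ^ n / (1 - r) ≤ 16 / 15 * r ^ n := by
          rw [div_le_iff₀ (by linarith)]
          nlinarith [pow_nonneg hr0.le n]
        linarith

lemma sep_bound (r a : ℝ) (hr0 : 0 < r) (hr1 : r ≤ 1 / 16) (ha3 : a ≤ 3)
    (A : ℕ → (ℕ → Bool) → ℝ) (hA : ∀ k ε, 1 ≤ A k ε ∧ A k ε ≤ a)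
    (hloc : ∀ k ε ε', (∀ j < k, ε j = ε' j) → A k ε = A k ε')
    (n k₀ : ℕ) (hk : k₀ < n) (ε ε' : ℕ → Bool)
    (hagree : ∀ k < k₀, ε k = ε' k) (hne : ε k₀ ≠ ε' k₀) :
    4 / 5 * r ^ k₀ ≤ |fN r A n ε - fN r A n ε'| := by
  have hdiff : fN r A n ε - fN r A n ε' = ∑ k ∈ Finset.range n,
      (A k ε / 2 * r ^ k * sgn (ε k) - A k ε' / 2 * r ^ k * sgn (ε' k)) := by
    unfold fN; rw [Finset.sum_sub_distrib]
  have hsplit : ∑ k ∈ Finset.range n,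
      (A k ε / 2 * r ^ k * sgn (ε k) - A k ε' / 2 * r ^ k * sgn (ε' k)) =
      ∑ k ∈ Finset.range (k₀ + 1),
        (A k ε / 2 * r ^ k * sgn (ε k) - A k ε' / 2 * r ^ k * sgn (ε' k)) +
      ∑ k ∈ Finset.Ico (k₀ + 1) n,
        (A k ε / 2 * r ^ k * sgn (ε k) - A k ε' / 2 * r ^ k * sgn (ε' k)) :=
    (Finset.sum_range_add_sum_Ico _ (by omega : k₀ + 1 ≤ n)).symm
  have hzero : ∀ k < k₀,
      A k ε / 2 * r ^ k * sgn (ε k) - A k ε' / 2 * r ^ k * sgn (ε' k) = 0 := by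
    intro k hkk
    have hAeq : A k ε = A k ε' := hloc k ε ε' fun j hj => hagree j (hj.trans hkk)
    rw [hAeq, hagree k hkk]
    ring
  have hhead : ∑ k ∈ Finset.range (k₀ + 1),
      (A k ε / 2 * r ^ k * sgn (ε k) - A k ε' / 2 * r ^ k * sgn (ε' k)) =
      A k₀ ε / 2 * r ^ k₀ * sgn (ε k₀) - A k₀ ε' / 2 * r ^ k₀ * sgn (ε' k₀) := by
    rw [Finset.sum_range_succ, Finset.sum_eq_zero fun k hk =>
      hzero k (Finset.mem_range.mp hk), zero_add]
  have hAeq : A k₀ ε = A k₀ ε' := hloc k₀ ε ε' hagree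
  have hsgn : |sgn (ε k₀) - sgn (ε' k₀)| = 2 := by
    cases h1 : ε k₀ <;> cases h2 : ε' k₀
    · exact absurd (h1.trans h2.symm) hne
    · norm_num [sgn]
    · norm_num [sgn]
    · exact absurd (h1.trans h2.symm) hne
  have habs_head : r ^ k₀ ≤
      |A k₀ ε / 2 * r ^ k₀ * sgn (ε k₀) - A k₀ ε' / 2 * r ^ k₀ * sgn (ε' k₀)| := by
    have heq : A k₀ ε / 2 * r ^ k₀ * sgn (ε k₀) - A k₀ ε' / 2 * r ^ k₀ * sgn (ε' k₀) =
        A k₀ ε / 2 * r ^ k₀ * (sgn (ε k₀) - sgn (ε' k₀)) := by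
      rw [← hAeq]; ring
    rw [heq, abs_mul, hsgn, abs_mul, abs_of_nonneg (pow_nonneg hr0.le k₀),
      abs_of_nonneg (by have := (hA k₀ ε).1; linarith)]
    have h1 := (hA k₀ ε).1
    nlinarith [pow_pos hr0 k₀]
  have htail : |∑ k ∈ Finset.Ico (k₀ + 1) n,
      (A k ε / 2 * r ^ k * sgn (ε k) - A k ε' / 2 * r ^ k * sgn (ε' k))| ≤
      1 / 5 * r ^ k₀ := by
    have hgeo := geom_aux r hr0.le (by linarith) (k₀ + 1) n
    calc |∑ k ∈ Finset.Ico (k₀ + 1) n,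
        (A k ε / 2 * r ^ k * sgn (ε k) - A k ε' / 2 * r ^ k * sgn (ε' k))|
        ≤ ∑ k ∈ Finset.Ico (k₀ + 1) n,
          |A k ε / 2 * r ^ k * sgn (ε k) - A k ε' / 2 * r ^ k * sgn (ε' k)| :=
          Finset.abs_sum_le_sum_abs _ _
      _ ≤ ∑ k ∈ Finset.Ico (k₀ + 1) n, 3 * r ^ k := by
          refine Finset.sum_le_sum fun k _ => ?_
          have h1 := term_abs_le r a hr0.le ha3 A hA k ε
          have h2 := term_abs_le r a hr0.le ha3 A hA k ε'
          have h3 := abs_sub (A k ε / 2 * r ^ k * sgn (ε k))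
            (A k ε' / 2 * r ^ k * sgn (ε' k))
          linarith
      _ = 3 * ∑ k ∈ Finset.Ico (k₀ + 1) n, r ^ k := by rw [Finset.mul_sum]
      _ ≤ 3 * (r ^ (k₀ + 1) / (1 - r)) := by nlinarith
      _ ≤ 1 / 5 * r ^ k₀ := by
          have h : r ^ (k₀ + 1) / (1 - r) ≤ 16 / 15 * r ^ (k₀ + 1) := by
            rw [div_le_iff₀ (by linarith)]
            nlinarith [pow_nonneg hr0.le (k₀ + 1)]
          have h2 : r ^ (k₀ + 1) = r ^ k₀ * r := pow_succ r k₀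
          nlinarith [pow_nonneg hr0.le k₀]
  rw [hdiff, hsplit, hhead]
  have h6 := abs_add_le
    (A k₀ ε / 2 * r ^ k₀ * sgn (ε k₀) - A k₀ ε' / 2 * r ^ k₀ * sgn (ε' k₀) +
      ∑ k ∈ Finset.Ico (k₀ + 1) n,
        (A k ε / 2 * r ^ k * sgn (ε k) - A k ε' / 2 * r ^ k * sgn (ε' k)))
    (-(∑ k ∈ Finset.Ico (k₀ + 1) n,
        (A k ε / 2 * r ^ k * sgn (ε k) - A k ε' / 2 * r ^ k * sgn (ε' k))))
  rw [add_neg_cancel_right, abs_neg] at h6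
  linarith

lemma log_close (u v T d : ℝ) (hd : 0 < d) (hu : d ≤ u) (huv : |u - v| ≤ T)
    (hT : T ≤ d / 2) : |Real.log u - Real.log v| ≤ 2 * T / d := by
  have hu0 : 0 < u := lt_of_lt_of_le hd hu
  have habs := abs_le.mp huv
  have hv0 : 0 < v := by linarith
  have hvd : d / 2 ≤ v := by linarith
  have hT0 : 0 ≤ T := le_trans (abs_nonneg _) huv
  rcases le_total u v with h | h
  · rw [abs_sub_comm, abs_of_nonneg (by
      have := Real.log_le_log hu0 h
      linarith)]
    have h1 : Real.log v - Real.log u = Real.log (v / u) :=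
      (Real.log_div hv0.ne' hu0.ne').symm
    have h2 : Real.log (v / u) ≤ v / u - 1 :=
      Real.log_le_sub_one_of_pos (by positivity)
    have h3 : v / u - 1 = (v - u) / u := by field_simp
    have h4 : (v - u) / u ≤ T / d := div_le_div₀ hT0 (by linarith) hd hu
    have h5 : T / d ≤ 2 * T / d := by
      have h6 := fun c => (add_div T T c).symm
      have h7 : 0 ≤ T / d := div_nonneg hT0 hd.le
      have h8 : 2 * T / d = (T + T) / d := by ring_nf
      rw [h8, ← h6]
      linarith
    linarith [h1, h2, h3, h4]
  · rw [abs_of_nonneg (by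
      have := Real.log_le_log hv0 h
      linarith)]
    have h1 : Real.log u - Real.log v = Real.log (u / v) :=
      (Real.log_div hu0.ne' hv0.ne').symm
    have h2 : Real.log (u / v) ≤ u / v - 1 :=
      Real.log_le_sub_one_of_pos (by positivity)
    have h3 : u / v - 1 = (u - v) / v := by field_simp
    have h4 : (u - v) / v ≤ T / (d / 2) := div_le_div₀ hT0 (by linarith) (by linarith) hvd
    have h5 : T / (d / 2) = 2 * T / d := by field_simp
    linarith

def app (n m : ℕ) (p : (Fin n → Bool) × (Fin (m - n) → Bool)) : Fin m → Bool :=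
  fun k => if h : (k : ℕ) < n then p.1 ⟨k, h⟩ else p.2 ⟨(k : ℕ) - n, by
    have := k.isLt; omega⟩

def appEquiv (n m : ℕ) (hnm : n ≤ m) :
    ((Fin n → Bool) × (Fin (m - n) → Bool)) ≃ (Fin m → Bool) where
  toFun := app n m
  invFun ρ := (fun k => ρ ⟨k, lt_of_lt_of_le k.isLt hnm⟩,
    fun k => ρ ⟨n + k, by have := k.isLt; omega⟩)
  left_inv p := by
    refine Prod.ext ?_ ?_
    · funext k
      show app n m p ⟨(k : ℕ), _⟩ = p.1 k
      unfold app
      rw [dif_pos (show ((⟨(k : ℕ), _⟩ : Fin m) : ℕ) < n from k.isLt)]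
    · funext k
      show app n m p ⟨n + (k : ℕ), _⟩ = p.2 k
      unfold app
      rw [dif_neg (show ¬ n + (k : ℕ) < n by omega)]
      exact congrArg p.2 (by
        apply Fin.ext
        show n + (k : ℕ) - n = (k : ℕ)
        omega)
  right_inv ρ := by
    funext k
    unfold app
    by_cases h : (k : ℕ) < n
    · rw [dif_pos h]
    · rw [dif_neg h]
      show ρ ⟨n + ((k : ℕ) - n), by have := k.isLt; omega⟩ = ρ k
      exact congrArg ρ (by
        apply Fin.ext
        show n + ((k : ℕ) - n) = (k : ℕ)
        omega)

lemma card_agree (n l : ℕ) (σ₀ : Fin n → Bool) :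
    (Finset.univ.filter fun σ : Fin n → Bool =>
      ∀ k : Fin n, (k : ℕ) < l → σ k = σ₀ k).card ≤ 2 ^ (n - l) := by
  classical
  have hinj : Set.InjOn (fun (σ : Fin n → Bool) (j : Fin (n - l)) =>
      σ ⟨l + (j : ℕ), by have := j.isLt; omega⟩)
      (Finset.univ.filter fun σ : Fin n → Bool =>
        ∀ k : Fin n, (k : ℕ) < l → σ k = σ₀ k) := by
    intro σ hσ σ' hσ' h
    have hσ2 := (Finset.mem_filter.mp hσ).2
    have hσ'2 := (Finset.mem_filter.mp hσ').2
    funext k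
    by_cases hk : (k : ℕ) < l
    · rw [hσ2 k hk, hσ'2 k hk]
    · have hkl : (k : ℕ) - l < n - l := by have := k.isLt; omega
      have := congrFun h ⟨(k : ℕ) - l, hkl⟩
      simp only at this
      have hke : (⟨l + ((k : ℕ) - l), by omega⟩ : Fin n) = k := by
        apply Fin.ext
        show l + ((k : ℕ) - l) = (k : ℕ)
        omega
      rwa [hke] at this
  have hcard := Finset.card_le_card_of_injOn _ (fun σ _ => Finset.mem_univ _) hinj
  calc (Finset.univ.filter fun σ : Fin n → Bool =>
        ∀ k : Fin n, (k : ℕ) < l → σ k = σ₀ k).card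
      ≤ (Finset.univ : Finset (Fin (n - l) → Bool)).card := hcard
    _ = 2 ^ (n - l) := by simp [Finset.card_univ]

/-- Fix `a ∈ [1,3]` and `r ∈ (0,1/16]`. There is `C > 0` (depending only on
`a, r`) such that for any admissible coefficients, all `1 ≤ n ≤ m`, every `x₀ ∈ K_n` and
every `y ∈ ℝ²` with `|y − x₀| = r^{n−1}/2`, one has `| g̃_n(y) − g̃_m(y) | ≤ C 2^{−n}`. -/
theorem stmt7 (a r : ℝ) (ha1 : 1 ≤ a) (ha3 : a ≤ 3) (hr0 : 0 < r) (hr1 : r ≤ 1 / 16) :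
    ∃ C : ℝ, 0 < C ∧
      ∀ A : ℕ → (ℕ → Bool) → ℝ,
        (∀ ε, A 0 ε = 1) →
        (∀ k ε, 1 ≤ A k ε ∧ A k ε ≤ a) →
        (∀ k ε ε', (∀ j < k, ε j = ε' j) → A k ε = A k ε') →
      ∀ n m : ℕ, 1 ≤ n → n ≤ m →
      ∀ σ₀ : Fin n → Bool, ∀ y : ℂ,
        ‖y - (fN r A n (extWord n σ₀) : ℂ)‖ = r ^ (n - 1) / 2 →
        |gTilde r A n y - gTilde r A m y| ≤ C * (2 : ℝ)⁻¹ ^ n := by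
  classical
  refine ⟨32, by norm_num, ?_⟩
  intro A hA0 hA hloc n m hn hnm σ₀ y hy
  have hr1' : r ≤ 1 := by linarith
  set X : (Fin n → Bool) → ℝ := fun σ => fN r A n (extWord n σ) with hX
  have hyX : ‖y - (X σ₀ : ℂ)‖ = r ^ (n - 1) / 2 := hy
  have hex : ∀ σ : Fin n → Bool, σ ≠ σ₀ →
      ∃ k, k < n ∧ extWord n σ k ≠ extWord n σ₀ k := by
    intro σ h
    obtain ⟨i, hi⟩ := Function.ne_iff.mp h
    exact ⟨(i : ℕ), i.isLt, by
      show extWord n σ (i : ℕ) ≠ extWord n σ₀ (i : ℕ)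
      unfold extWord
      rw [dif_pos i.isLt, dif_pos i.isLt]
      simpa using hi⟩
  set L : (Fin n → Bool) → ℕ := fun σ =>
    if h : σ = σ₀ then n - 1 else Nat.find (hex σ h) with hLdef
  have hLpos : L σ₀ = n - 1 := dif_pos rfl
  have hLneg : ∀ σ (h : σ ≠ σ₀), L σ = Nat.find (hex σ h) := fun σ h => dif_neg h
  have hL_le : ∀ σ, L σ ≤ n - 1 := by
    intro σ
    by_cases h : σ = σ₀
    · rw [h, hLpos]
    · rw [hLneg σ h]
      have := (Nat.find_spec (hex σ h)).1
      omega
  -- distance lower bound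
  have hdist : ∀ σ : Fin n → Bool, 3 / 10 * r ^ L σ ≤ ‖y - (X σ : ℂ)‖ := by
    intro σ
    by_cases h : σ = σ₀
    · rw [h, hLpos, hyX]
      nlinarith [pow_nonneg hr0.le (n - 1)]
    · rw [hLneg σ h]
      have hspec := Nat.find_spec (hex σ h)
      have hk₀n : Nat.find (hex σ h) < n := hspec.1
      have hagree : ∀ k < Nat.find (hex σ h), extWord n σ k = extWord n σ₀ k := by
        intro k hk
        have hmin := Nat.find_min (hex σ h) hk
        push_neg at hmin
        exact hmin (by omega)
      have hsep := sep_bound r a hr0 hr1 ha3 A hA hloc n (Nat.find (hex σ h)) hk₀n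
        (extWord n σ) (extWord n σ₀) hagree hspec.2
      have htri : ‖((X σ : ℝ) : ℂ) - ((X σ₀ : ℝ) : ℂ)‖ ≤
          ‖(X σ : ℂ) - y‖ + ‖y - (X σ₀ : ℂ)‖ := norm_sub_le_norm_sub_add_norm_sub _ _ _
      have hnorm : ‖((X σ : ℝ) : ℂ) - ((X σ₀ : ℝ) : ℂ)‖ = |X σ - X σ₀| := by
        rw [← Complex.ofReal_sub, Complex.norm_real]
        exact Real.norm_eq_abs _
      have hrev : ‖(X σ : ℂ) - y‖ = ‖y - (X σ : ℂ)‖ := norm_sub_rev _ _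
      have hpow : r ^ (n - 1) ≤ r ^ Nat.find (hex σ h) :=
        pow_le_pow_of_le_one hr0.le hr1' (by omega)
      rw [hnorm, hrev, hyX] at htri
      linarith
  -- per-term bound
  have hterm : ∀ σ : Fin n → Bool, ∀ ρ : Fin m → Bool,
      (∀ k < n, extWord m ρ k = extWord n σ k) →
      |Real.log ‖y - (X σ : ℂ)‖ - Real.log ‖y - (fN r A m (extWord m ρ) : ℂ)‖| ≤
        32 / 3 * r ^ (n - L σ) := by
    intro σ ρ hpre
    have hXeq : fN r A n (extWord m ρ) = X σ := fN_congr r A hloc n _ _ hpre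
    have htail := tail_bound r a hr0 hr1 ha3 A hA n m hnm (extWord m ρ)
    rw [hXeq] at htail
    have huv : |‖y - (X σ : ℂ)‖ - ‖y - (fN r A m (extWord m ρ) : ℂ)‖| ≤ 8 / 5 * r ^ n := by
      have h1 := abs_norm_sub_norm_le (y - (X σ : ℂ)) (y - (fN r A m (extWord m ρ) : ℂ))
      have h2 : (y - (X σ : ℂ)) - (y - (fN r A m (extWord m ρ) : ℂ)) =
          (((fN r A m (extWord m ρ) - X σ : ℝ)) : ℂ) := by push_cast; ring
      rw [h2, Complex.norm_real] at h1
      exact h1.trans htail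
    have hd0 : (0 : ℝ) < 3 / 10 * r ^ L σ := by positivity
    have hLn : L σ + (n - L σ) = n := by have := hL_le σ; omega
    have hrpow : r ^ n = r ^ L σ * r ^ (n - L σ) := by rw [← pow_add, hLn]
    have hexp1 : 1 ≤ n - L σ := by have := hL_le σ; omega
    have hrsmall : r ^ (n - L σ) ≤ r := by
      calc r ^ (n - L σ) ≤ r ^ 1 := pow_le_pow_of_le_one hr0.le hr1' hexp1
        _ = r := pow_one r
    have hT : 8 / 5 * r ^ n ≤ (3 / 10 * r ^ L σ) / 2 := by
      rw [hrpow]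
      nlinarith [pow_nonneg hr0.le (L σ), pow_nonneg hr0.le (n - L σ)]
    have hlog := log_close ‖y - (X σ : ℂ)‖ ‖y - (fN r A m (extWord m ρ) : ℂ)‖
      (8 / 5 * r ^ n) (3 / 10 * r ^ L σ) hd0 (hdist σ) huv hT
    calc |Real.log ‖y - (X σ : ℂ)‖ - Real.log ‖y - (fN r A m (extWord m ρ) : ℂ)‖|
        ≤ 2 * (8 / 5 * r ^ n) / (3 / 10 * r ^ L σ) := hlog
      _ = 32 / 3 * r ^ (n - L σ) := by
          rw [hrpow]
          have hp := (pow_pos hr0 (L σ)).ne'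
          field_simp
          ring
  -- prefix property of app
  have hpre : ∀ σ : Fin n → Bool, ∀ τ : Fin (m - n) → Bool, ∀ k, k < n →
      extWord m (app n m (σ, τ)) k = extWord n σ k := by
    intro σ τ k hk
    have hkm : k < m := lt_of_lt_of_le hk hnm
    unfold extWord app
    rw [dif_pos hkm, dif_pos hk, dif_pos (show ((⟨k, hkm⟩ : Fin m) : ℕ) < n from hk)]
  -- sum bound
  have hsum : ∑ σ : Fin n → Bool, r ^ (n - L σ) ≤ 1 := by
    have hmap : ∀ σ : Fin n → Bool, σ ∈ Finset.univ → L σ ∈ Finset.range n :=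
      fun σ _ => Finset.mem_range.mpr (by have := hL_le σ; omega)
    rw [← Finset.sum_fiberwise_of_maps_to hmap]
    have hstep : ∀ l ∈ Finset.range n,
        ∑ σ ∈ Finset.univ.filter fun σ : Fin n → Bool => L σ = l, r ^ (n - L σ) ≤
          (1 / 8 : ℝ) ^ (n - l) := by
      intro l hl
      have hsub : (Finset.univ.filter fun σ : Fin n → Bool => L σ = l) ⊆
          Finset.univ.filter fun σ : Fin n → Bool =>
            ∀ k : Fin n, (k : ℕ) < l → σ k = σ₀ k := by
        intro σ hσ
        have hσl := (Finset.mem_filter.mp hσ).2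
        refine Finset.mem_filter.mpr ⟨Finset.mem_univ _, fun k hk => ?_⟩
        have hag : extWord n σ (k : ℕ) = extWord n σ₀ (k : ℕ) := by
          by_cases h : σ = σ₀
          · rw [h]
          · have hkL : (k : ℕ) < Nat.find (hex σ h) := by
              rw [← hLneg σ h, hσl]; exact hk
            have hmin := Nat.find_min (hex σ h) hkL
            push_neg at hmin
            exact hmin k.isLt
        unfold extWord at hag
        rw [dif_pos k.isLt, dif_pos k.isLt] at hag
        simpa using hag
      calc ∑ σ ∈ Finset.univ.filter fun σ : Fin n → Bool => L σ = l, r ^ (n - L σ)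
          = ∑ σ ∈ Finset.univ.filter fun σ : Fin n → Bool => L σ = l, r ^ (n - l) := by
            refine Finset.sum_congr rfl fun σ hσ => ?_
            rw [(Finset.mem_filter.mp hσ).2]
        _ = (Finset.univ.filter fun σ : Fin n → Bool => L σ = l).card * r ^ (n - l) := by
            rw [Finset.sum_const, nsmul_eq_mul]
        _ ≤ (2 : ℝ) ^ (n - l) * r ^ (n - l) := by
            refine mul_le_mul_of_nonneg_right ?_ (pow_nonneg hr0.le _)
            have hc := (Finset.card_le_card hsub).trans (card_agree n l σ₀)
            calc ((Finset.univ.filter fun σ : Fin n → Bool => L σ = l).card : ℝ)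
                ≤ ((2 ^ (n - l) : ℕ) : ℝ) := by exact_mod_cast hc
              _ = (2 : ℝ) ^ (n - l) := by push_cast; ring
        _ = (2 * r) ^ (n - l) := by rw [mul_pow]
        _ ≤ (1 / 8 : ℝ) ^ (n - l) := by
            refine pow_le_pow_left₀ (by linarith) (by linarith) _
    have hgeo8 : ∑ j ∈ Finset.range n, (1 / 8 : ℝ) ^ j ≤ 8 / 7 := by
      have := geom_aux (1 / 8 : ℝ) (by norm_num) (by norm_num) 0 n
      rw [← Finset.range_eq_Ico] at this
      norm_num at this
      linarith
    calc ∑ l ∈ Finset.range n, ∑ σ ∈ Finset.univ.filter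
          (fun σ : Fin n → Bool => L σ = l), r ^ (n - L σ)
        ≤ ∑ l ∈ Finset.range n, (1 / 8 : ℝ) ^ (n - l) := Finset.sum_le_sum hstep
      _ = ∑ j ∈ Finset.range n, (1 / 8 : ℝ) ^ (n - (n - 1 - j)) := by
          exact (Finset.sum_range_reflect (fun l => (1 / 8 : ℝ) ^ (n - l)) n).symm
      _ = ∑ j ∈ Finset.range n, (1 / 8 : ℝ) * (1 / 8 : ℝ) ^ j := by
          refine Finset.sum_congr rfl fun j hj => ?_
          have hjn := Finset.mem_range.mp hj
          have : n - (n - 1 - j) = j + 1 := by omega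
          rw [this, pow_succ]
          ring
      _ = (1 / 8 : ℝ) * ∑ j ∈ Finset.range n, (1 / 8 : ℝ) ^ j := by
          rw [Finset.mul_sum]
      _ ≤ 1 := by nlinarith
  -- rewrite both potentials as sums over pairs
  have hgm : gTilde r A m y = (2 : ℝ)⁻¹ ^ m *
      ∑ p : (Fin n → Bool) × (Fin (m - n) → Bool),
        Real.log ‖y - (fN r A m (extWord m (app n m p)) : ℂ)‖ := by
    unfold gTilde
    congr 1
    exact (Equiv.sum_comp (appEquiv n m hnm)
      fun ρ => Real.log ‖y - (fN r A m (extWord m ρ) : ℂ)‖).symm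
  have hcardτ : ((Finset.univ : Finset (Fin (m - n) → Bool)).card : ℝ) = 2 ^ (m - n) := by
    simp [Finset.card_univ]
  have hpow2 : (2 : ℝ)⁻¹ ^ m * (2 : ℝ) ^ (m - n) = (2 : ℝ)⁻¹ ^ n := by
    have h1 : (2 : ℝ)⁻¹ ^ m = (2 : ℝ)⁻¹ ^ n * (2 : ℝ)⁻¹ ^ (m - n) := by
      rw [← pow_add]
      congr 1
      omega
    rw [h1, mul_assoc, ← mul_pow]
    norm_num
  have hgn : gTilde r A n y = (2 : ℝ)⁻¹ ^ m *
      ∑ p : (Fin n → Bool) × (Fin (m - n) → Bool), Real.log ‖y - (X p.1 : ℂ)‖ := by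
    unfold gTilde
    rw [Fintype.sum_prod_type]
    have h2 : ∀ σ : Fin n → Bool,
        ∑ _τ : Fin (m - n) → Bool, Real.log ‖y - (X σ : ℂ)‖ =
          (2 : ℝ) ^ (m - n) * Real.log ‖y - (X σ : ℂ)‖ := by
      intro σ
      rw [Finset.sum_const, nsmul_eq_mul, hcardτ]
    rw [Finset.sum_congr rfl fun σ _ => h2 σ, ← Finset.mul_sum, ← mul_assoc, hpow2]
  have hdiff : gTilde r A n y - gTilde r A m y = (2 : ℝ)⁻¹ ^ m *
      ∑ p : (Fin n → Bool) × (Fin (m - n) → Bool),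
        (Real.log ‖y - (X p.1 : ℂ)‖ -
          Real.log ‖y - (fN r A m (extWord m (app n m p)) : ℂ)‖) := by
    rw [hgn, hgm, Finset.sum_sub_distrib, mul_sub]
  have hbound : |gTilde r A n y - gTilde r A m y| ≤ (2 : ℝ)⁻¹ ^ m *
      ∑ p : (Fin n → Bool) × (Fin (m - n) → Bool), 32 / 3 * r ^ (n - L p.1) := by
    rw [hdiff, abs_mul, abs_of_nonneg (by positivity : (0:ℝ) ≤ (2 : ℝ)⁻¹ ^ m)]
    refine mul_le_mul_of_nonneg_left ?_ (by positivity)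
    refine (Finset.abs_sum_le_sum_abs _ _).trans ?_
    refine Finset.sum_le_sum fun p _ => ?_
    exact hterm p.1 (app n m p) (hpre p.1 p.2)
  have hfinal : (2 : ℝ)⁻¹ ^ m *
      ∑ p : (Fin n → Bool) × (Fin (m - n) → Bool), 32 / 3 * r ^ (n - L p.1) ≤
      32 * (2 : ℝ)⁻¹ ^ n := by
    rw [Fintype.sum_prod_type]
    have h2 : ∀ σ : Fin n → Bool,
        ∑ _τ : Fin (m - n) → Bool, 32 / 3 * r ^ (n - L σ) =
          (2 : ℝ) ^ (m - n) * (32 / 3 * r ^ (n - L σ)) := by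
      intro σ
      rw [Finset.sum_const, nsmul_eq_mul, hcardτ]
    rw [Finset.sum_congr rfl fun σ _ => h2 σ, ← Finset.mul_sum, ← mul_assoc, hpow2,
      ← Finset.mul_sum]
    have h3 : (0:ℝ) ≤ (2 : ℝ)⁻¹ ^ n := by positivity
    calc (2 : ℝ)⁻¹ ^ n * (32 / 3 * ∑ σ : Fin n → Bool, r ^ (n - L σ))
        ≤ (2 : ℝ)⁻¹ ^ n * (32 / 3 * 1) := by
          refine mul_le_mul_of_nonneg_left ?_ h3
          nlinarith
      _ ≤ 32 * (2 : ℝ)⁻¹ ^ n := by nlinarith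
  exact hbound.trans hfinal

end
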